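/- (Parameter-dependent Lyapunov LMI, affine case) Let A(α) = Σ_{i=1}^l A_i α_i and P(α) = Σ_{i=1}^l P_i α_i with P_i symmetric. Suppose P_i ≻ 0 for all i, A_i^T P_i + P_i A_i ≺ 0 for all i, and A_i^T P_j + A_j^T P_i + P_j A_i + P_i A_j ≺ 0 for all 1 ≤ i < j ≤ l. Then for every α in the unit simplex Δ^l, P(α) ≻ 0 and A(α)^T P(α) + P(α) A(α) ≺ 0. -/

import Mathlib

open Matrix

lemma dv_smul {n : ℕ} (c : ℝ) (M : Matrix (Fin n) (Fin n) ℝ) (x : Fin n → ℝ) :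
    x ⬝ᵥ ((c • M) *ᵥ x) = c * (x ⬝ᵥ (M *ᵥ x)) := by
  rw [smul_mulVec, dotProduct_smul, smul_eq_mul]

lemma dv_sum {n : ℕ} {ι : Type*} (s : Finset ι) (M : ι → Matrix (Fin n) (Fin n) ℝ)
    (x : Fin n → ℝ) :
    x ⬝ᵥ ((∑ i ∈ s, M i) *ᵥ x) = ∑ i ∈ s, x ⬝ᵥ (M i *ᵥ x) := by
  classical
  induction s using Finset.induction with
  | empty => simp
  | insert _ _ h ih => simp [Finset.sum_insert h, add_mulVec, dotProduct_add, ih]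

lemma dv_add {n : ℕ} (M N : Matrix (Fin n) (Fin n) ℝ) (x : Fin n → ℝ) :
    x ⬝ᵥ ((M + N) *ᵥ x) = x ⬝ᵥ (M *ᵥ x) + x ⬝ᵥ (N *ᵥ x) := by
  rw [add_mulVec, dotProduct_add]

theorem parameter_dependent_lyapunov (n l : ℕ)
    (A : Fin l → Matrix (Fin n) (Fin n) ℝ)
    (P : Fin l → Matrix (Fin n) (Fin n) ℝ)
    (hP : ∀ i, (P i).PosDef)
    (hAii : ∀ i, (-((A i)ᵀ * P i + P i * A i)).PosDef)
    (hAij : ∀ i j, i < j →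
      (-((A i)ᵀ * P j + (A j)ᵀ * P i + P j * A i + P i * A j)).PosDef) :
    ∀ α : Fin l → ℝ, (∀ i, 0 ≤ α i) → (∑ i, α i) = 1 →
      (∑ i, α i • P i).PosDef ∧
      (-((∑ i, α i • A i)ᵀ * (∑ i, α i • P i)
          + (∑ i, α i • P i) * (∑ i, α i • A i))).PosDef := by
  intro α hα hsum
  obtain ⟨i0, hi0⟩ : ∃ i0, 0 < α i0 := by
    by_contra h
    push_neg at h
    have h0 : ∀ i, α i = 0 := fun i => le_antisymm (h i) (hα i)
    simp [h0] at hsum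
  -- symmetry of each P i and of the sum
  have hPsym : ∀ i, (P i)ᵀ = P i := fun i => by
    rw [← conjTranspose_eq_transpose_of_trivial]; exact (hP i).isHermitian
  have hQsym : (∑ i, α i • P i)ᵀ = ∑ i, α i • P i := by
    rw [transpose_sum]
    exact Finset.sum_congr rfl fun i _ => by rw [transpose_smul, hPsym i]
  constructor
  · refine posDef_iff_dotProduct_mulVec.mpr ⟨?_, ?_⟩
    · rw [IsHermitian, conjTranspose_eq_transpose_of_trivial, hQsym]
    · intro x hx
      simp only [star_trivial]
      rw [show (∑ i, α i • P i) *ᵥ x = (∑ i ∈ Finset.univ, α i • P i) *ᵥ x from rfl,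
        dv_sum]
      simp only [dv_smul]
      apply Finset.sum_pos'
      · intro i _
        exact mul_nonneg (hα i) (by simpa using (hP i).posSemidef.dotProduct_mulVec_nonneg x)
      · exact ⟨i0, Finset.mem_univ _,
          mul_pos hi0 (by simpa using (hP i0).dotProduct_mulVec_pos hx)⟩
  · set B := ∑ i, α i • A i with hB
    set Q := ∑ i, α i • P i with hQ
    refine posDef_iff_dotProduct_mulVec.mpr ⟨?_, ?_⟩
    · rw [IsHermitian, conjTranspose_eq_transpose_of_trivial]
      rw [transpose_neg, transpose_add, transpose_mul, transpose_mul,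
        transpose_transpose, hQsym, add_comm]
    · -- expand into a double sum
      have h1 : Bᵀ * Q = ∑ i, ∑ j, (α i * α j) • ((A i)ᵀ * P j) := by
        rw [hB, hQ, transpose_sum, Finset.sum_mul_sum]
        simp [transpose_smul, smul_mul_assoc, mul_smul_comm, smul_smul, mul_comm]
      have h2 : Q * B = ∑ i, ∑ j, (α i * α j) • (P i * A j) := by
        rw [hB, hQ, Finset.sum_mul_sum]
        simp [smul_mul_assoc, mul_smul_comm, smul_smul, mul_comm]
      have hexp : -(Bᵀ * Q + Q * B)
          = ∑ i, ∑ j, (α i * α j) • (-((A i)ᵀ * P j + P i * A j)) := by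
        rw [h1, h2]
        simp [smul_neg, smul_add, Finset.sum_add_distrib, neg_add]
      intro x hx
      simp only [star_trivial]
      rw [hexp, dv_sum]
      simp only [dv_sum, dv_smul]
      -- q i j is the quadratic form of the (i,j) block
      set q : Fin l → Fin l → ℝ :=
        fun i j => x ⬝ᵥ ((-((A i)ᵀ * P j + P i * A j)) *ᵥ x) with hq
      have hqq : ∀ i j, i ≠ j → 0 < q i j + q j i := by
        intro i j hij
        have key : ∀ i j, i < j → 0 < q i j + q j i := by
          intro i j hlt
          have := (hAij i j hlt).dotProduct_mulVec_pos hx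
          simp only [star_trivial] at this
          have heq : (-((A i)ᵀ * P j + (A j)ᵀ * P i + P j * A i + P i * A j))
              = (-((A i)ᵀ * P j + P i * A j)) + (-((A j)ᵀ * P i + P j * A i)) := by
            abel
          rw [heq, dv_add] at this
          exact this
        rcases lt_or_gt_of_ne hij with h | h
        · exact key i j h
        · have := key j i h; linarith
      have hqd : ∀ i, 0 < q i i := by
        intro i
        have := (hAii i).dotProduct_mulVec_pos hx
        simpa only [star_trivial] using this
      -- symmetrize
      have hsym : (∑ i, ∑ j, α i * α j * q i j)
          = (1/2) * ∑ i, ∑ j, (α i * α j * q i j + α j * α i * q j i) := by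
        have : (∑ i, ∑ j, α j * α i * q j i) = ∑ i, ∑ j, α i * α j * q i j :=
          Finset.sum_comm
        rw [Finset.sum_congr rfl fun i _ => Finset.sum_add_distrib,
          Finset.sum_add_distrib, this]
        ring
      rw [hsym]
      have hpos : 0 < ∑ i, ∑ j, (α i * α j * q i j + α j * α i * q j i) := by
        apply Finset.sum_pos'
        · intro i _
          apply Finset.sum_nonneg
          intro j _
          rcases eq_or_ne i j with rfl | hij
          · have := hqd i; nlinarith [sq_nonneg (α i), mul_nonneg (hα i) (hα i)]
          · have := hqq i j hij
            have hn : 0 ≤ α i * α j := mul_nonneg (hα i) (hα j)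
            nlinarith
        · refine ⟨i0, Finset.mem_univ _, ?_⟩
          apply Finset.sum_pos'
          · intro j _
            rcases eq_or_ne i0 j with rfl | hij
            · have := hqd i0; nlinarith
            · have := hqq i0 j hij
              have hn : 0 ≤ α i0 * α j := mul_nonneg (hα i0) (hα j)
              nlinarith
          · refine ⟨i0, Finset.mem_univ _, ?_⟩
            have h := mul_pos (mul_pos hi0 hi0) (hqd i0)
            linarith
      linarith
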